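/- Let H be a 2k-dimensional complex vector space with symplectic basis μ_1, …, μ_k, λ_1, …, λ_k, let c : {1, …, k} → {1, …, n} be a surjective map (a coloring), and let Λ be a real symmetric k × k matrix such that for every pair of colors s, t ∈ {1, …, n} the block sum vanishes: Σ_{i : c(i)=s} Σ_{j : c(j)=t} Λ_{ij} = 0. Set M = span_ℂ{μ_1, …, μ_k}, let P be the complex span of the vectors μ_i − μ_j for all pairs i, j with c(i) = c(j) together with the vectors v_s = Σ_{i : c(i)=s} λ_i for each color s, and let V_Λ = span_ℂ{w_1, …, w_k} with w_i = λ_i − Σ_{j=1}^k Λ_{ij} μ_j. Then the Maslov triple index satisfies τ(M, P, V_Λ) = 0. -/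

import Mathlib

open Complex

/-- A nondegenerate skew-Hermitian sesquilinear form (conjugate-linear in the
first variable, linear in the second). -/
structure IsSymplForm {H : Type*} [AddCommGroup H] [Module ℂ H] (ω : H → H → ℂ) : Prop where
  add_left : ∀ x y z : H, ω (x + y) z = ω x z + ω y z
  smul_left : ∀ (c : ℂ) (x y : H), ω (c • x) y = (starRingEnd ℂ) c * ω x y
  add_right : ∀ x y z : H, ω x (y + z) = ω x y + ω x z
  smul_right : ∀ (c : ℂ) (x y : H), ω x (c • y) = c * ω x y
  skew : ∀ x y : H, ω y x = -((starRingEnd ℂ) (ω x y))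
  nondeg : ∀ x : H, (∀ y : H, ω x y = 0) → x = 0

/-- A subspace is Lagrangian if it equals its orthogonal complement. -/
def IsLagrangian {H : Type*} [AddCommGroup H] [Module ℂ H]
    (ω : H → H → ℂ) (L : Submodule ℂ H) : Prop :=
  (L : Set H) = {x : H | ∀ l ∈ L, ω x l = 0}

/-- A choice of the `L1`-component of a decomposition of `x ∈ L1 ⊔ L2`. -/
noncomputable def firstPart {H : Type*} [AddCommGroup H] [Module ℂ H]
    (L1 L2 : Submodule ℂ H) (x : H) : H :=
  letI := Classical.propDecidable (x ∈ L1 ⊔ L2)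
  if hx : x ∈ L1 ⊔ L2 then Classical.choose (Submodule.mem_sup.mp hx) else 0

/-- The Maslov form of a triple of Lagrangians, computed via a choice of
decompositions: `ψ(a,b) = ω(a₁, b₂)`. -/
noncomputable def maslovForm {H : Type*} [AddCommGroup H] [Module ℂ H]
    (ω : H → H → ℂ) (L1 L2 : Submodule ℂ H) (a b : H) : ℂ :=
  ω (firstPart L1 L2 a) (b - firstPart L1 L2 b)

/-- The maximal dimension of a subspace of `W` on which `ψ` is positive definite. -/
noncomputable def posIndex {H : Type*} [AddCommGroup H] [Module ℂ H]
    (ψ : H → H → ℂ) (W : Submodule ℂ H) : ℕ :=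
  sSup {d : ℕ | ∃ S : Submodule ℂ H, S ≤ W ∧ Module.finrank ℂ S = d ∧
    ∀ x ∈ S, x ≠ 0 → 0 < (ψ x x).re}

/-- The maximal dimension of a subspace of `W` on which `ψ` is negative definite. -/
noncomputable def negIndex {H : Type*} [AddCommGroup H] [Module ℂ H]
    (ψ : H → H → ℂ) (W : Submodule ℂ H) : ℕ :=
  sSup {d : ℕ | ∃ S : Submodule ℂ H, S ≤ W ∧ Module.finrank ℂ S = d ∧
    ∀ x ∈ S, x ≠ 0 → (ψ x x).re < 0}

/-- The Maslov triple index: the signature of the Maslov form of `(L1, L2, L3)`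
on `(L1 ⊔ L2) ⊓ L3`. -/
noncomputable def maslovIndex {H : Type*} [AddCommGroup H] [Module ℂ H]
    (ω : H → H → ℂ) (L1 L2 L3 : Submodule ℂ H) : ℤ :=
  (posIndex (maslovForm ω L1 L2) ((L1 ⊔ L2) ⊓ L3) : ℤ) -
  (negIndex (maslovForm ω L1 L2) ((L1 ⊔ L2) ⊓ L3) : ℤ)

/-- For a coloring `c` and a real symmetric matrix `Λ` whose color-blocks all
sum to zero, the Maslov triple index `τ(M, P, V_Λ)` vanishes. -/
theorem maslovIndex_colored_vanishing {H : Type*} [AddCommGroup H] [Module ℂ H]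
    {k n : ℕ} (hk : 1 ≤ k)
    (b : Module.Basis (Fin k ⊕ Fin k) ℂ H) (μ lam : Fin k → H)
    (hμ : ∀ i, μ i = b (Sum.inl i)) (hlam : ∀ i, lam i = b (Sum.inr i))
    (ω : H → H → ℂ) (hω : IsSymplForm ω)
    (hμμ : ∀ i j, ω (μ i) (μ j) = 0)
    (hll : ∀ i j, ω (lam i) (lam j) = 0)
    (hml : ∀ i j, ω (μ i) (lam j) = if i = j then -1 else 0)
    (c : Fin k → Fin n) (hc : Function.Surjective c)
    (Λ : Matrix (Fin k) (Fin k) ℝ) (hΛ : Λ.IsSymm)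
    (hblock : ∀ s t : Fin n,
      ∑ i ∈ Finset.univ.filter (fun i => c i = s),
        ∑ j ∈ Finset.univ.filter (fun j => c j = t), Λ i j = 0)
    (v : Fin n → H)
    (hv : ∀ s, v s = ∑ i ∈ Finset.univ.filter (fun i => c i = s), lam i)
    (w : Fin k → H) (hw : ∀ i, w i = lam i - ∑ j, ((Λ i j : ℂ) • μ j))
    (M P VΛ : Submodule ℂ H)
    (hM : M = Submodule.span ℂ (Set.range μ))
    (hP : P = Submodule.span ℂ
      ({x : H | ∃ i j, c i = c j ∧ x = μ i - μ j} ∪ Set.range v))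
    (hV : VΛ = Submodule.span ℂ (Set.range w)) :
    maslovIndex ω M P VΛ = 0 := by
  classical
  -- Package ω as a sesquilinear map.
  set B : H →ₗ⋆[ℂ] H →ₗ[ℂ] ℂ := LinearMap.mk₂'ₛₗ (starRingEnd ℂ) (RingHom.id ℂ) ω
    hω.add_left (by simpa [smul_eq_mul] using hω.smul_left)
    hω.add_right (by simpa [smul_eq_mul] using hω.smul_right) with hBdef
  have hB : ∀ x y : H, B x y = ω x y := fun x y => rfl
  -- Isotropy of spans
  have isoSpan : ∀ (s : Set H), (∀ x ∈ s, ∀ y ∈ s, ω x y = 0) →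
      ∀ x ∈ Submodule.span ℂ s, ∀ y ∈ Submodule.span ℂ s, ω x y = 0 := by
    intro s hs x hx y hy
    have h1 : ∀ a ∈ s, ∀ z ∈ Submodule.span ℂ s, B a z = 0 := by
      intro a ha z hz
      induction hz using Submodule.span_induction with
      | mem u hu => exact hs a ha u hu
      | zero => simp
      | add u w _ _ ihu ihw => rw [map_add, ihu, ihw, add_zero]
      | smul t u _ ihu => rw [map_smul, ihu, smul_zero]
    rw [← hB]
    induction hx using Submodule.span_induction with
    | mem u hu => exact h1 u hu y hy
    | zero => simp
    | add u w _ _ ihu ihw =>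
        rw [map_add, LinearMap.add_apply, ihu, ihw, add_zero]
    | smul t u _ ihu =>
        rw [map_smulₛₗ, LinearMap.smul_apply, ihu, smul_zero]
  -- M is isotropic
  have hMiso : ∀ x ∈ M, ∀ y ∈ M, ω x y = 0 := by
    rw [hM]
    apply isoSpan
    rintro _ ⟨i, rfl⟩ _ ⟨j, rfl⟩
    exact hμμ i j
  -- helper values
  have hμv : ∀ i t, ω (μ i) (v t) = if c i = t then (-1 : ℂ) else 0 := by
    intro i t
    rw [← hB, hv, map_sum]
    have : ∀ p ∈ Finset.univ.filter (fun p => c p = t),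
        B (μ i) (lam p) = if i = p then (-1 : ℂ) else 0 := by
      intro p _; rw [hB]; exact hml i p
    rw [Finset.sum_congr rfl this, Finset.sum_ite_eq]
    simp
  -- P is isotropic
  have hPiso : ∀ x ∈ P, ∀ y ∈ P, ω x y = 0 := by
    rw [hP]
    apply isoSpan
    have key : ∀ x ∈ ({x : H | ∃ i j, c i = c j ∧ x = μ i - μ j} ∪ Set.range v),
        ∀ i j, c i = c j → ω (μ i - μ j) x = 0 := by
      rintro x (⟨p, q, hpq, rfl⟩ | ⟨t, rfl⟩) i j hij
      · rw [← hB]; simp only [map_sub, LinearMap.sub_apply, hB, hμμ]; ring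
      · rw [← hB]
        simp only [map_sub, LinearMap.sub_apply, hB, hμv, hij]
        ring
    have keyv : ∀ x ∈ ({x : H | ∃ i j, c i = c j ∧ x = μ i - μ j} ∪ Set.range v),
        ∀ t, ω x (v t) = 0 := by
      rintro x (⟨p, q, hpq, rfl⟩ | ⟨s, rfl⟩) t
      · exact key _ (Or.inr ⟨t, rfl⟩) p q hpq
      · rw [hv, hv, ← hB]
        rw [map_sum B lam _, LinearMap.sum_apply]
        apply Finset.sum_eq_zero
        intro i _
        rw [map_sum]
        apply Finset.sum_eq_zero
        intro j _
        rw [hB]; exact hll i j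
    rintro x hx y hy
    rcases hx with ⟨p, q, hpq, rfl⟩ | ⟨s, rfl⟩
    · exact key y hy p q hpq
    · rcases hy with ⟨i, j, hij, rfl⟩ | ⟨t, rfl⟩
      · rw [hω.skew, key _ (Or.inr ⟨s, rfl⟩) i j hij]; simp
      · exact keyv _ (Or.inr ⟨s, rfl⟩) t
  -- firstPart spec
  have hfp : ∀ x, x ∈ M ⊔ P → firstPart M P x ∈ M ∧ x - firstPart M P x ∈ P := by
    intro x hx
    unfold firstPart
    rw [dif_pos hx]
    obtain ⟨h1, z, hz, hzx⟩ := Classical.choose_spec (Submodule.mem_sup.mp hx)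
    refine ⟨h1, ?_⟩
    have hz' : x - Classical.choose (Submodule.mem_sup.mp hx) = z :=
      sub_eq_of_eq_add' hzx.symm
    exact hz'.symm ▸ hz
  -- The Maslov form vanishes on (M ⊔ P) ⊓ VΛ
  have hψ : ∀ x ∈ (M ⊔ P) ⊓ VΛ, maslovForm ω M P x x = 0 := by
    intro x hx
    obtain ⟨hxMP, hxV⟩ := hx
    -- coefficients from VΛ
    rw [hV] at hxV
    obtain ⟨a, ha⟩ := (Submodule.mem_span_range_iff_exists_fun ℂ).mp hxV
    -- decomposition x = m + q with m ∈ span μ, q ∈ span v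
    have hPle : P ≤ Submodule.span ℂ (Set.range μ) ⊔ Submodule.span ℂ (Set.range v) := by
      rw [hP, Submodule.span_le]
      rintro x (⟨i, j, hij, rfl⟩ | ⟨t, rfl⟩)
      · exact Submodule.mem_sup_left (Submodule.sub_mem _
          (Submodule.subset_span ⟨i, rfl⟩) (Submodule.subset_span ⟨j, rfl⟩))
      · exact Submodule.mem_sup_right (Submodule.subset_span ⟨t, rfl⟩)
    have hMPle : M ⊔ P ≤ Submodule.span ℂ (Set.range μ) ⊔ Submodule.span ℂ (Set.range v) := by
      apply sup_le _ hPle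
      rw [hM]; exact le_sup_left
    obtain ⟨m, hm, q, hq, hmq⟩ := Submodule.mem_sup.mp (hMPle hxMP)
    obtain ⟨u, hu⟩ := (Submodule.mem_span_range_iff_exists_fun ℂ).mp hm
    obtain ⟨β, hβ⟩ := (Submodule.mem_span_range_iff_exists_fun ℂ).mp hq
    -- Expand x in the basis two ways.
    set A : Fin k → ℂ := fun j => ∑ i, a i * (Λ i j : ℂ) with hA
    have hx1 : x = ∑ i, a i • lam i - ∑ j, A j • μ j := by
      rw [← ha]
      have : ∀ i, a i • w i = a i • lam i - ∑ j, (a i * (Λ i j : ℂ)) • μ j := by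
        intro i
        rw [hw i, smul_sub, Finset.smul_sum]
        congr 1
        refine Finset.sum_congr rfl fun j _ => ?_
        rw [smul_smul]
      rw [Finset.sum_congr rfl fun i _ => this i, Finset.sum_sub_distrib]
      congr 1
      rw [Finset.sum_comm]
      refine Finset.sum_congr rfl fun j _ => ?_
      rw [hA, Finset.sum_smul]
    have hq' : q = ∑ i, (β (c i)) • lam i := by
      rw [← hβ]
      have : ∀ s, β s • v s = ∑ i ∈ Finset.univ.filter (fun i => c i = s), β (c i) • lam i := by
        intro s
        rw [hv, Finset.smul_sum]
        refine Finset.sum_congr rfl fun i hi => ?_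
        rw [(Finset.mem_filter.mp hi).2]
      rw [Finset.sum_congr rfl fun s _ => this s]
      exact Finset.sum_fiberwise_of_maps_to (fun i _ => Finset.mem_univ (c i)) _
    have hx2 : x = ∑ j, u j • μ j + ∑ i, (β (c i)) • lam i := by
      rw [← hmq, hu, hq']
    -- compare coefficients
    set F : Fin k ⊕ Fin k → ℂ := fun z =>
      Sum.casesOn z (fun j => -(A j) - u j) (fun i => a i - β (c i)) with hF
    have hFsum : ∑ z, F z • b z = 0 := by
      rw [Fintype.sum_sum_type]
      have h1 : ∀ j, F (Sum.inl j) • b (Sum.inl j) = (-(A j) - u j) • μ j := by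
        intro j; rw [hμ]
      have h2 : ∀ i, F (Sum.inr i) • b (Sum.inr i) = (a i - β (c i)) • lam i := by
        intro i; rw [hlam]
      rw [Finset.sum_congr rfl fun j _ => h1 j, Finset.sum_congr rfl fun i _ => h2 i]
      have key : (∑ j, (-(A j) - u j) • μ j) + ∑ i, (a i - β (c i)) • lam i
          = (∑ i, a i • lam i - ∑ j, A j • μ j)
            - (∑ j, u j • μ j + ∑ i, (β (c i)) • lam i) := by
        simp only [sub_smul, neg_smul, Finset.sum_sub_distrib, Finset.sum_neg_distrib]
        abel
      rw [key, ← hx1, ← hx2, sub_self]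
    have hF0 : ∀ z, F z = 0 :=
      Fintype.linearIndependent_iff.mp b.linearIndependent F hFsum
    have hu0 : ∀ j, u j = -(A j) := by
      intro j
      have := hF0 (Sum.inl j)
      simp only [hF] at this
      linear_combination -this
    have ha0 : ∀ i, a i = β (c i) := by
      intro i
      have := hF0 (Sum.inr i)
      simp only [hF] at this
      linear_combination this
    -- the chosen decomposition
    obtain ⟨hfM, hfP⟩ := hfp x hxMP
    have hmM : m ∈ M := by rw [hM]; exact hm
    have hqP : q ∈ P := by
      rw [hP]
      apply Submodule.span_mono Set.subset_union_right
      exact hq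
    -- maslovForm x x = ω m q
    have hgen : ∀ m' q' d : H, m' ∈ M → q' ∈ P → d ∈ M → d ∈ P →
        ω (m' + d) (q' - d) = ω m' q' := by
      intro m' q' d hm' hq'' hdM' hdP'
      rw [← hB, map_add, LinearMap.add_apply, map_sub, map_sub,
        hB, hB, hB, hB, hMiso m' hm' d hdM', hPiso d hdP' q' hq'', hMiso d hdM' d hdM']
      ring
    have hd : maslovForm ω M P x x = ω m q := by
      have hdM : firstPart M P x - m ∈ M := Submodule.sub_mem _ hfM hmM
      have hdP : firstPart M P x - m ∈ P := by
        have heq : firstPart M P x - m = q - (x - firstPart M P x) := by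
          rw [← hmq]; abel
        rw [heq]
        exact Submodule.sub_mem _ hqP hfP
      have e1 : m + (firstPart M P x - m) = firstPart M P x := by abel
      have e2 : q - (firstPart M P x - m) = x - firstPart M P x := by
        rw [← hmq]; abel
      have hsplit : maslovForm ω M P x x
          = ω (m + (firstPart M P x - m)) (q - (firstPart M P x - m)) := by
        unfold maslovForm
        rw [e1, e2]
      rw [hsplit, hgen m q _ hmM hqP hdM hdP]
    -- compute ω m q
    have hval : ω m q = ∑ i, ∑ j, (starRingEnd ℂ) (a i) * (Λ i j : ℂ) * a j := by
      have hq2 : q = ∑ i, a i • lam i := by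
        rw [hq']
        exact (Finset.sum_congr rfl fun i _ => by rw [ha0 i]).symm
      rw [← hB, ← hu, hq2, map_sum B (fun j => u j • μ j) Finset.univ, LinearMap.sum_apply]
      have : ∀ j, (B (u j • μ j)) (∑ i, a i • lam i)
          = (starRingEnd ℂ) (A j) * a j := by
        intro j
        rw [map_smulₛₗ, LinearMap.smul_apply, map_sum]
        have h3 : ∀ i, (B (μ j)) (a i • lam i) = a i * (if j = i then -1 else 0) := by
          intro i
          rw [map_smul, smul_eq_mul, hB, hml]
        rw [Finset.sum_congr rfl fun i _ => h3 i]
        simp only [mul_ite, mul_neg_one, mul_zero]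
        rw [Finset.sum_ite_eq, if_pos (Finset.mem_univ j)]
        rw [smul_eq_mul, hu0 j, map_neg]
        ring
      rw [Finset.sum_congr rfl fun j _ => this j]
      rw [Finset.sum_comm]
      refine Finset.sum_congr rfl fun i _ => ?_
      simp only [hA]
      simp only [map_sum, map_mul, Complex.conj_ofReal]
      rw [Finset.sum_mul]
    -- regroup by colors and use hblock
    rw [hd, hval]
    have step1 : ∀ i, ∑ j, (starRingEnd ℂ) (a i) * (Λ i j : ℂ) * a j
        = ∑ t, ∑ j ∈ Finset.univ.filter (fun j => c j = t),
            (starRingEnd ℂ) (a i) * (Λ i j : ℂ) * a j :=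
      fun i => (Finset.sum_fiberwise_of_maps_to (fun j _ => Finset.mem_univ (c j)) _).symm
    rw [Finset.sum_congr rfl fun i _ => step1 i]
    rw [← Finset.sum_fiberwise_of_maps_to (fun i (_ : i ∈ Finset.univ) => Finset.mem_univ (c i))
      (fun i => ∑ t, ∑ j ∈ Finset.univ.filter (fun j => c j = t),
        (starRingEnd ℂ) (a i) * (Λ i j : ℂ) * a j)]
    apply Finset.sum_eq_zero
    intro s _
    rw [Finset.sum_comm]
    apply Finset.sum_eq_zero
    intro t _
    have : ∑ i ∈ Finset.univ.filter (fun i => c i = s),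
        ∑ j ∈ Finset.univ.filter (fun j => c j = t),
          (starRingEnd ℂ) (a i) * (Λ i j : ℂ) * a j
        = (starRingEnd ℂ) (β s) * β t *
          ((∑ i ∈ Finset.univ.filter (fun i => c i = s),
            ∑ j ∈ Finset.univ.filter (fun j => c j = t), Λ i j : ℝ) : ℂ) := by
      push_cast
      rw [Finset.mul_sum]
      refine Finset.sum_congr rfl fun i hi => ?_
      rw [Finset.mul_sum]
      refine Finset.sum_congr rfl fun j hj => ?_
      rw [ha0 i, ha0 j, (Finset.mem_filter.mp hi).2, (Finset.mem_filter.mp hj).2]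
      ring
    rw [this, hblock s t]
    simp
  -- Now both indices are 0.
  have hset : ∀ (pred : ℝ → Prop), ¬ pred 0 →
      {d : ℕ | ∃ S : Submodule ℂ H, S ≤ (M ⊔ P) ⊓ VΛ ∧ Module.finrank ℂ S = d ∧
        ∀ x ∈ S, x ≠ 0 → pred ((maslovForm ω M P x x).re)} = {0} := by
    intro pred hpred
    ext d
    simp only [Set.mem_setOf_eq, Set.mem_singleton_iff]
    constructor
    · rintro ⟨S, hSle, hSrank, hSpos⟩
      have hSbot : S = ⊥ := by
        rw [Submodule.eq_bot_iff]
        intro x hxS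
        by_contra hx0
        have := hSpos x hxS hx0
        rw [hψ x (hSle hxS)] at this
        simp only [Complex.zero_re] at this
        exact hpred this
      rw [← hSrank, hSbot, finrank_bot]
    · rintro rfl
      exact ⟨⊥, bot_le, finrank_bot ℂ H, fun x hx hx0 => absurd ((Submodule.mem_bot ℂ).mp hx) hx0⟩
  unfold maslovIndex posIndex negIndex
  rw [hset (fun r => 0 < r) (lt_irrefl 0), hset (fun r => r < 0) (lt_irrefl 0),
    csSup_singleton]
  simp
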